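/- arXiv:1903.06009 — 3 statements merged into one kernel-verified Lean document; each statement's English description precedes it below -/
import Mathlib

section
/- Let Z_1, …, Z_n be non-negatively associated real random variables with |Z_i| ≤ C almost surely for each i, where C > 0 is a constant. Then for every λ > 0, | E[exp(λ·Σ_{i=1}^{n} Z_i)] − Π_{i=1}^{n} E[exp(λ·Z_i)] | ≤ λ²·exp(n·λ·C)·Σ_{1 ≤ i < j ≤ n} Cov(Z_i, Z_j). -/
open MeasureTheory ProbabilityTheory Real Finset

/-- Real random variables `Z 0, …, Z (n-1)` on a common probability space are
*non-negatively associated* if for every pair of bounded measurable functions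
`f g : ℝⁿ → ℝ` that are nondecreasing in each coordinate (i.e. monotone for the
coordinatewise order), `Cov(f(Z), g(Z)) ≥ 0`. -/
def NonNegativelyAssociated {Ω : Type*} [MeasureSpace Ω] {n : ℕ}
    (Z : Fin n → Ω → ℝ) : Prop :=
  ∀ f g : (Fin n → ℝ) → ℝ,
    Measurable f → Measurable g →
    (∃ Cf, ∀ x, |f x| ≤ Cf) → (∃ Cg, ∀ x, |g x| ≤ Cg) →
    Monotone f → Monotone g →
    0 ≤ (∫ ω, f (fun i => Z i ω) * g (fun i => Z i ω)) -
        (∫ ω, f (fun i => Z i ω)) * (∫ ω, g (fun i => Z i ω))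


set_option linter.unusedSectionVars false
set_option linter.unusedVariables false


section Aux
variable {Ω : Type*} [MeasureSpace Ω] [IsProbabilityMeasure (ℙ : Measure Ω)]

/-- bounded measurable -/
def IsBddM (X : Ω → ℝ) : Prop := Measurable X ∧ ∃ M, ∀ ω, |X ω| ≤ M

lemma IsBddM.integrable {X : Ω → ℝ} (h : IsBddM X) : Integrable X := by
  obtain ⟨hm, M, hM⟩ := h
  exact ⟨hm.aestronglyMeasurable,
    MeasureTheory.HasFiniteIntegral.of_bounded (C := M)
      (Filter.Eventually.of_forall fun ω => by simpa using hM ω)⟩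

lemma IsBddM.mul {X Y : Ω → ℝ} (hX : IsBddM X) (hY : IsBddM Y) :
    IsBddM (fun ω => X ω * Y ω) := by
  obtain ⟨hmX, MX, hMX⟩ := hX
  obtain ⟨hmY, MY, hMY⟩ := hY
  refine ⟨hmX.mul hmY, MX * MY, fun ω => ?_⟩
  rw [abs_mul]
  exact mul_le_mul (hMX ω) (hMY ω) (abs_nonneg _) ((abs_nonneg _).trans (hMX ω))

lemma IsBddM.add {X Y : Ω → ℝ} (hX : IsBddM X) (hY : IsBddM Y) :
    IsBddM (fun ω => X ω + Y ω) := by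
  obtain ⟨hmX, MX, hMX⟩ := hX
  obtain ⟨hmY, MY, hMY⟩ := hY
  exact ⟨hmX.add hmY, MX + MY, fun ω => (abs_add_le _ _).trans (add_le_add (hMX ω) (hMY ω))⟩

lemma IsBddM.sub {X Y : Ω → ℝ} (hX : IsBddM X) (hY : IsBddM Y) :
    IsBddM (fun ω => X ω - Y ω) := by
  obtain ⟨hmX, MX, hMX⟩ := hX
  obtain ⟨hmY, MY, hMY⟩ := hY
  exact ⟨hmX.sub hmY, MX + MY, fun ω => (abs_sub _ _).trans (add_le_add (hMX ω) (hMY ω))⟩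

lemma IsBddM.const_mul {X : Ω → ℝ} (hX : IsBddM X) (c : ℝ) :
    IsBddM (fun ω => c * X ω) := by
  obtain ⟨hmX, MX, hMX⟩ := hX
  refine ⟨hmX.const_mul c, |c| * MX, fun ω => ?_⟩
  rw [abs_mul]
  exact mul_le_mul_of_nonneg_left (hMX ω) (abs_nonneg c)

lemma IsBddM.finsetSum {ι : Type*} (s : Finset ι) (X : ι → Ω → ℝ)
    (h : ∀ i ∈ s, IsBddM (X i)) : IsBddM (fun ω => ∑ i ∈ s, X i ω) := by
  classical
  induction s using Finset.induction_on with
  | empty => exact ⟨measurable_const, 0, fun ω => by simp⟩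
  | insert a s ha ih =>
    simp only [Finset.sum_insert ha]
    exact (h a (Finset.mem_insert_self a s)).add
      (ih fun i hi => h i (Finset.mem_insert_of_mem hi))

/-- covariance -/
noncomputable def covO (X Y : Ω → ℝ) : ℝ :=
  (∫ ω, X ω * Y ω) - (∫ ω, X ω) * (∫ ω, Y ω)

lemma covO_comm (X Y : Ω → ℝ) : covO X Y = covO Y X := by
  unfold covO
  simp_rw [mul_comm (X _) (Y _)]
  ring

lemma covO_add_left {X Y U : Ω → ℝ} (hX : IsBddM X) (hY : IsBddM Y) (hU : IsBddM U) :
    covO (fun ω => X ω + Y ω) U = covO X U + covO Y U := by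
  unfold covO
  simp_rw [add_mul]
  rw [integral_add (hX.mul hU).integrable (hY.mul hU).integrable,
    integral_add hX.integrable hY.integrable]
  ring

lemma covO_const_mul_left {X U : Ω → ℝ} (c : ℝ) :
    covO (fun ω => c * X ω) U = c * covO X U := by
  unfold covO
  simp_rw [mul_assoc]
  rw [integral_const_mul c, integral_const_mul c]
  ring

lemma covO_sub_left {X Y U : Ω → ℝ} (hX : IsBddM X) (hY : IsBddM Y) (hU : IsBddM U) :
    covO (fun ω => X ω - Y ω) U = covO X U - covO Y U := by
  have h1 : covO (fun ω => X ω + (-1) * Y ω) U = covO X U + covO (fun ω => (-1) * Y ω) U :=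
    covO_add_left hX (hY.const_mul (-1)) hU
  simp_rw [sub_eq_add_neg, neg_eq_neg_one_mul (Y _)]
  rw [h1, covO_const_mul_left]
  ring

lemma covO_add_right {X U V : Ω → ℝ} (hX : IsBddM X) (hU : IsBddM U) (hV : IsBddM V) :
    covO X (fun ω => U ω + V ω) = covO X U + covO X V := by
  rw [covO_comm, covO_add_left hU hV hX, covO_comm U, covO_comm V]

lemma covO_sub_right {X U V : Ω → ℝ} (hX : IsBddM X) (hU : IsBddM U) (hV : IsBddM V) :
    covO X (fun ω => U ω - V ω) = covO X U - covO X V := by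
  rw [covO_comm, covO_sub_left hU hV hX, covO_comm U, covO_comm V]

lemma covO_sum_left {ι : Type*} (s : Finset ι) (X : ι → Ω → ℝ) (U : Ω → ℝ)
    (h : ∀ i ∈ s, IsBddM (X i)) (hU : IsBddM U) :
    covO (fun ω => ∑ i ∈ s, X i ω) U = ∑ i ∈ s, covO (X i) U := by
  classical
  induction s using Finset.induction_on with
  | empty =>
    simp only [Finset.sum_empty]
    unfold covO
    simp
  | insert a s ha ih =>
    simp only [Finset.sum_insert ha]
    rw [covO_add_left (h a (Finset.mem_insert_self a s))
      (IsBddM.finsetSum s X fun i hi => h i (Finset.mem_insert_of_mem hi)) hU,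
      ih fun i hi => h i (Finset.mem_insert_of_mem hi)]

/-- key sandwich: if covariances of the monotone combinations are nonneg,
then covO f g ≤ covO hf hg -/
lemma covO_le_of_sandwich {f g hf hg : Ω → ℝ}
    (hbf : IsBddM f) (hbg : IsBddM g) (hbhf : IsBddM hf) (hbhg : IsBddM hg)
    (h1 : 0 ≤ covO (fun ω => hf ω - f ω) (fun ω => hg ω + g ω))
    (h2 : 0 ≤ covO (fun ω => hf ω + f ω) (fun ω => hg ω - g ω)) :
    covO f g ≤ covO hf hg := by
  rw [covO_sub_left hbhf hbf (hbhg.add hbg), covO_add_right hbhf hbhg hbg,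
    covO_add_right hbf hbhg hbg] at h1
  rw [covO_add_left hbhf hbf (hbhg.sub hbg), covO_sub_right hbhf hbhg hbg,
    covO_sub_right hbf hbhg hbg] at h2
  linarith

lemma exp_sub_exp_le {a b M : ℝ} (hab : a ≤ b) (hbM : b ≤ M) :
    Real.exp b - Real.exp a ≤ Real.exp M * (b - a) := by
  have h1 : Real.exp b - Real.exp a = Real.exp b * (1 - Real.exp (a - b)) := by
    rw [mul_sub, mul_one, ← Real.exp_add]
    ring_nf
  have h2 : 1 - Real.exp (a - b) ≤ b - a := by
    have := Real.add_one_le_exp (a - b)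
    linarith
  rw [h1]
  calc Real.exp b * (1 - Real.exp (a - b)) ≤ Real.exp b * (b - a) :=
        mul_le_mul_of_nonneg_left h2 (Real.exp_pos b).le
    _ ≤ Real.exp M * (b - a) :=
        mul_le_mul_of_nonneg_right (Real.exp_le_exp.2 hbM) (by linarith)

end Aux

lemma pairSum_insert {ι : Type*} [LinearOrder ι] [DecidableEq ι]
    (c : ι → ι → ℝ) (hsymm : ∀ i j, c i j = c j i)
    (s : Finset ι) (a : ι) (ha : a ∉ s) :
    ∑ i ∈ insert a s, ∑ j ∈ (insert a s).filter (fun j => i < j), c i j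
      = (∑ i ∈ s, ∑ j ∈ s.filter (fun j => i < j), c i j) + ∑ i ∈ s, c i a := by
  rw [Finset.sum_insert ha]
  have h2 : ∑ j ∈ (insert a s).filter (fun j => a < j), c a j
      = ∑ j ∈ s.filter (fun j => a < j), c a j := by
    rw [Finset.filter_insert]
    simp [lt_irrefl]
  have h1 : ∀ i ∈ s, ∑ j ∈ (insert a s).filter (fun j => i < j), c i j
      = (∑ j ∈ s.filter (fun j => i < j), c i j) + if i < a then c i a else 0 := by
    intro i hi
    rw [Finset.filter_insert]
    split_ifs with h
    · rw [Finset.sum_insert (fun hc => ha (Finset.mem_of_mem_filter a hc))]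
      ring
    · simp
  rw [h2, Finset.sum_congr rfl h1, Finset.sum_add_distrib]
  have h3 : ∑ j ∈ s.filter (fun j => a < j), c a j
      = ∑ i ∈ s, if a < i then c i a else 0 := by
    rw [Finset.sum_filter]
    exact Finset.sum_congr rfl fun i _ => by rw [hsymm]
  rw [h3]
  have h4 : ∀ i ∈ s, ((if a < i then c i a else 0) + if i < a then c i a else 0) = c i a := by
    intro i hi
    have hne : i ≠ a := fun h => ha (h ▸ hi)
    rcases hne.lt_or_gt with h | h
    · simp [h, not_lt_of_gt h]
    · simp [h, not_lt_of_gt h]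
  have h5 : ((∑ i ∈ s, if a < i then c i a else 0) + ∑ i ∈ s, if i < a then c i a else 0)
      = ∑ i ∈ s, c i a := by
    rw [← Finset.sum_add_distrib]
    exact Finset.sum_congr rfl h4
  linarith

noncomputable def clampC (C x : ℝ) : ℝ := max (min x C) (-C)

lemma clampC_monotone (C : ℝ) : Monotone (clampC C) :=
  (monotone_id.min monotone_const).max monotone_const

lemma clampC_measurable (C : ℝ) : Measurable (clampC C) :=
  (measurable_id.min measurable_const).max measurable_const

lemma abs_clampC_le {C : ℝ} (hC : 0 ≤ C) (x : ℝ) : |clampC C x| ≤ C :=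
  abs_le.2 ⟨le_max_right _ _, max_le (min_le_right _ _) (by linarith)⟩

lemma clampC_eq {C x : ℝ} (h : |x| ≤ C) : clampC C x = x := by
  rw [abs_le] at h
  unfold clampC
  rw [min_eq_left h.2, max_eq_left h.1]

lemma mono_lin_sub_exp {α : Type*} [Preorder α] {T : α → ℝ} (hT : Monotone T)
    {B l : ℝ} (hl : 0 < l) (hTB : ∀ x, T x ≤ B) :
    Monotone (fun x => (l * Real.exp (l * B)) * T x - Real.exp (l * T x)) := by
  intro x y hxy
  have h1 : T x ≤ T y := hT hxy
  have h2 : Real.exp (l * T y) - Real.exp (l * T x)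
      ≤ Real.exp (l * B) * (l * T y - l * T x) :=
    exp_sub_exp_le (mul_le_mul_of_nonneg_left h1 hl.le)
      (mul_le_mul_of_nonneg_left (hTB y) hl.le)
  have h3 : Real.exp (l * B) * (l * T y - l * T x)
      = (l * Real.exp (l * B)) * T y - (l * Real.exp (l * B)) * T x := by ring
  simp only
  linarith

section Newman
variable {Ω : Type*} [MeasureSpace Ω] [IsProbabilityMeasure (ℙ : Measure Ω)]

lemma T_abs_le {n : ℕ} {C : ℝ} (hC : 0 ≤ C) (s : Finset (Fin n)) (x : Fin n → ℝ) :
    |∑ i ∈ s, clampC C (x i)| ≤ s.card * C := by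
  calc |∑ i ∈ s, clampC C (x i)| ≤ ∑ i ∈ s, |clampC C (x i)| :=
        Finset.abs_sum_le_sum_abs _ _
    _ ≤ ∑ _i ∈ s, C := Finset.sum_le_sum fun i _ => abs_clampC_le hC (x i)
    _ = s.card * C := by rw [Finset.sum_const, nsmul_eq_mul]

lemma newman_bound {n : ℕ} (Z : Fin n → Ω → ℝ) (hmeas : ∀ i, Measurable (Z i))
    (C : ℝ) (hC : 0 < C) (hNA : NonNegativelyAssociated Z)
    (l : ℝ) (hl : 0 < l) (s : Finset (Fin n)) (a : Fin n) :
    covO (fun ω => Real.exp (l * ∑ i ∈ s, clampC C (Z i ω)))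
         (fun ω => Real.exp (l * clampC C (Z a ω)))
      ≤ l ^ 2 * Real.exp (l * (s.card + 1) * C) *
          ∑ i ∈ s, covO (fun ω => clampC C (Z i ω)) (fun ω => clampC C (Z a ω)) := by
  classical
  set T : (Fin n → ℝ) → ℝ := fun x => ∑ i ∈ s, clampC C (x i) with hT
  set U : (Fin n → ℝ) → ℝ := fun x => clampC C (x a) with hU
  have hTmono : Monotone T := fun x y h =>
    Finset.sum_le_sum fun i _ => clampC_monotone C (h i)
  have hUmono : Monotone U := fun x y h => clampC_monotone C (h a)
  have hTmeas : Measurable T :=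
    Finset.measurable_sum s fun i _ => (clampC_measurable C).comp (measurable_pi_apply i)
  have hUmeas : Measurable U := (clampC_measurable C).comp (measurable_pi_apply a)
  have hTle : ∀ x, T x ≤ s.card * C := fun x => (abs_le.1 (T_abs_le hC.le s x)).2
  have hUle : ∀ x, U x ≤ C := fun x => (abs_le.1 (abs_clampC_le hC.le (x a))).2
  set Lf : ℝ := l * Real.exp (l * (s.card * C)) with hLf
  set Lg : ℝ := l * Real.exp (l * C) with hLg
  -- the four functions on ℝⁿ
  set f : (Fin n → ℝ) → ℝ := fun x => Real.exp (l * T x) with hf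
  set g : (Fin n → ℝ) → ℝ := fun x => Real.exp (l * U x) with hg
  set hF : (Fin n → ℝ) → ℝ := fun x => Lf * T x with hhF
  set hG : (Fin n → ℝ) → ℝ := fun x => Lg * U x with hhG
  -- boundedness of everything
  have hfB : ∀ x, |f x| ≤ Real.exp (l * (s.card * C)) := fun x => by
    rw [abs_of_pos (Real.exp_pos _)]
    exact Real.exp_le_exp.2 (mul_le_mul_of_nonneg_left (hTle x) hl.le)
  have hgB : ∀ x, |g x| ≤ Real.exp (l * C) := fun x => by
    rw [abs_of_pos (Real.exp_pos _)]
    exact Real.exp_le_exp.2 (mul_le_mul_of_nonneg_left (hUle x) hl.le)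
  have hhFB : ∀ x, |hF x| ≤ |Lf| * (s.card * C) := fun x => by
    rw [abs_mul]
    exact mul_le_mul_of_nonneg_left ((T_abs_le hC.le s x)) (abs_nonneg _)
  have hhGB : ∀ x, |hG x| ≤ |Lg| * C := fun x => by
    rw [abs_mul]
    exact mul_le_mul_of_nonneg_left (abs_clampC_le hC.le (x a)) (abs_nonneg _)
  -- measurability
  have hfm : Measurable f := (hTmeas.const_mul l).exp
  have hgm : Measurable g := (hUmeas.const_mul l).exp
  have hhFm : Measurable hF := hTmeas.const_mul Lf
  have hhGm : Measurable hG := hUmeas.const_mul Lg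
  -- monotonicity of combinations
  have hmono1 : Monotone (fun x => hF x - f x) := mono_lin_sub_exp hTmono hl hTle
  have hmono2 : Monotone (fun x => hG x - g x) := mono_lin_sub_exp hUmono hl hUle
  have hmono3 : Monotone (fun x => hF x + f x) := fun x y h =>
    add_le_add (mul_le_mul_of_nonneg_left (hTmono h)
      (by positivity)) (Real.exp_le_exp.2 (mul_le_mul_of_nonneg_left (hTmono h) hl.le))
  have hmono4 : Monotone (fun x => hG x + g x) := fun x y h =>
    add_le_add (mul_le_mul_of_nonneg_left (hUmono h)
      (by positivity)) (Real.exp_le_exp.2 (mul_le_mul_of_nonneg_left (hUmono h) hl.le))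
  -- IsBddM for composed Ω-functions
  have bdd : ∀ (φ : (Fin n → ℝ) → ℝ), Measurable φ → (∃ M, ∀ x, |φ x| ≤ M) →
      IsBddM (fun ω => φ (fun i => Z i ω)) := by
    intro φ hφ ⟨M, hM⟩
    exact ⟨hφ.comp (measurable_pi_lambda _ hmeas), M, fun ω => hM _⟩
  have hbf := bdd f hfm ⟨_, hfB⟩
  have hbg := bdd g hgm ⟨_, hgB⟩
  have hbhF := bdd hF hhFm ⟨_, hhFB⟩
  have hbhG := bdd hG hhGm ⟨_, hhGB⟩
  -- NA applications
  have h1 : 0 ≤ covO (fun ω => hF (fun i => Z i ω) - f (fun i => Z i ω))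
      (fun ω => hG (fun i => Z i ω) + g (fun i => Z i ω)) :=
    hNA (fun x => hF x - f x) (fun x => hG x + g x) (hhFm.sub hfm) (hhGm.add hgm)
      ⟨_, fun x => (abs_sub _ _).trans (add_le_add (hhFB x) (hfB x))⟩
      ⟨_, fun x => (abs_add_le _ _).trans (add_le_add (hhGB x) (hgB x))⟩
      hmono1 hmono4
  have h2 : 0 ≤ covO (fun ω => hF (fun i => Z i ω) + f (fun i => Z i ω))
      (fun ω => hG (fun i => Z i ω) - g (fun i => Z i ω)) :=
    hNA (fun x => hF x + f x) (fun x => hG x - g x) (hhFm.add hfm) (hhGm.sub hgm)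
      ⟨_, fun x => (abs_add_le _ _).trans (add_le_add (hhFB x) (hfB x))⟩
      ⟨_, fun x => (abs_sub _ _).trans (add_le_add (hhGB x) (hgB x))⟩
      hmono3 hmono2
  have key : covO (fun ω => f (fun i => Z i ω)) (fun ω => g (fun i => Z i ω))
      ≤ covO (fun ω => hF (fun i => Z i ω)) (fun ω => hG (fun i => Z i ω)) :=
    covO_le_of_sandwich hbf hbg hbhF hbhG h1 h2
  -- compute covO hF hG
  have hWbddM : ∀ i : Fin n, IsBddM (fun ω => clampC C (Z i ω)) := fun i =>
    ⟨(clampC_measurable C).comp (hmeas i), C, fun ω => abs_clampC_le hC.le _⟩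
  have expand : covO (fun ω => hF (fun i => Z i ω)) (fun ω => hG (fun i => Z i ω))
      = Lf * (Lg * ∑ i ∈ s, covO (fun ω => clampC C (Z i ω)) (fun ω => clampC C (Z a ω))) := by
    have e1 : covO (fun ω => hF (fun i => Z i ω)) (fun ω => hG (fun i => Z i ω))
        = Lf * covO (fun ω => T (fun i => Z i ω)) (fun ω => hG (fun i => Z i ω)) :=
      covO_const_mul_left Lf
    rw [e1, covO_comm, covO_const_mul_left, covO_comm]
    congr 1
    congr 1
    exact covO_sum_left s (fun i ω => clampC C (Z i ω)) _ (fun i _ => hWbddM i)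
      (hWbddM a)
  have hLfLg : Lf * Lg = l ^ 2 * Real.exp (l * (s.card + 1) * C) := by
    have hE : Real.exp (l * (↑s.card * C)) * Real.exp (l * C)
        = Real.exp (l * (↑s.card + 1) * C) := by
      rw [← Real.exp_add]
      congr 1
      ring
    rw [hLf, hLg, mul_mul_mul_comm, hE, ← pow_two]
  calc covO (fun ω => Real.exp (l * ∑ i ∈ s, clampC C (Z i ω)))
         (fun ω => Real.exp (l * clampC C (Z a ω)))
      = covO (fun ω => f (fun i => Z i ω)) (fun ω => g (fun i => Z i ω)) := rfl
    _ ≤ covO (fun ω => hF (fun i => Z i ω)) (fun ω => hG (fun i => Z i ω)) := key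
    _ = l ^ 2 * Real.exp (l * (s.card + 1) * C) *
          ∑ i ∈ s, covO (fun ω => clampC C (Z i ω)) (fun ω => clampC C (Z a ω)) := by
        rw [expand, ← mul_assoc, hLfLg]

end Newman
section Induct
variable {Ω : Type*} [MeasureSpace Ω] [IsProbabilityMeasure (ℙ : Measure Ω)]

lemma covFG_nonneg {n : ℕ} (Z : Fin n → Ω → ℝ) (hmeas : ∀ i, Measurable (Z i))
    (C : ℝ) (hC : 0 < C) (hNA : NonNegativelyAssociated Z)
    (l : ℝ) (hl : 0 < l) (s : Finset (Fin n)) (a : Fin n) :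
    0 ≤ covO (fun ω => Real.exp (l * ∑ i ∈ s, clampC C (Z i ω)))
         (fun ω => Real.exp (l * clampC C (Z a ω))) := by
  refine hNA (fun x => Real.exp (l * ∑ i ∈ s, clampC C (x i)))
    (fun x => Real.exp (l * clampC C (x a)))
    ((Finset.measurable_sum s fun i _ =>
        (clampC_measurable C).comp (measurable_pi_apply i)).const_mul l).exp
    (((clampC_measurable C).comp (measurable_pi_apply a)).const_mul l).exp
    ⟨Real.exp (l * (s.card * C)), fun x => ?_⟩
    ⟨Real.exp (l * C), fun x => ?_⟩
    (fun x y h => Real.exp_le_exp.2 (mul_le_mul_of_nonneg_left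
      (Finset.sum_le_sum fun i _ => clampC_monotone C (h i)) hl.le))
    (fun x y h => Real.exp_le_exp.2 (mul_le_mul_of_nonneg_left
      (clampC_monotone C (h a)) hl.le))
  · rw [abs_of_pos (Real.exp_pos _)]
    exact Real.exp_le_exp.2 (mul_le_mul_of_nonneg_left
      (abs_le.1 (T_abs_le hC.le s x)).2 hl.le)
  · rw [abs_of_pos (Real.exp_pos _)]
    exact Real.exp_le_exp.2 (mul_le_mul_of_nonneg_left
      (abs_le.1 (abs_clampC_le hC.le (x a))).2 hl.le)

lemma covWW_nonneg {n : ℕ} (Z : Fin n → Ω → ℝ) (hmeas : ∀ i, Measurable (Z i))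
    (C : ℝ) (hC : 0 < C) (hNA : NonNegativelyAssociated Z) (i j : Fin n) :
    0 ≤ covO (fun ω => clampC C (Z i ω)) (fun ω => clampC C (Z j ω)) :=
  hNA (fun x => clampC C (x i)) (fun x => clampC C (x j))
    ((clampC_measurable C).comp (measurable_pi_apply i))
    ((clampC_measurable C).comp (measurable_pi_apply j))
    ⟨C, fun x => abs_clampC_le hC.le _⟩ ⟨C, fun x => abs_clampC_le hC.le _⟩
    (fun x y h => clampC_monotone C (h i)) (fun x y h => clampC_monotone C (h j))

lemma bddF {n : ℕ} (Z : Fin n → Ω → ℝ) (hmeas : ∀ i, Measurable (Z i))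
    (C : ℝ) (hC : 0 < C) (l : ℝ) (hl : 0 < l) (s : Finset (Fin n)) :
    IsBddM (fun ω => Real.exp (l * ∑ i ∈ s, clampC C (Z i ω))) := by
  refine ⟨((Finset.measurable_sum s fun i _ =>
      (clampC_measurable C).comp (hmeas i)).const_mul l).exp,
    Real.exp (l * (s.card * C)), fun ω => ?_⟩
  rw [abs_of_pos (Real.exp_pos _)]
  exact Real.exp_le_exp.2 (mul_le_mul_of_nonneg_left
    (abs_le.1 (T_abs_le hC.le s (fun i => Z i ω))).2 hl.le)

lemma main_induction {n : ℕ} (Z : Fin n → Ω → ℝ) (hmeas : ∀ i, Measurable (Z i))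
    (C : ℝ) (hC : 0 < C) (hNA : NonNegativelyAssociated Z)
    (l : ℝ) (hl : 0 < l) (s : Finset (Fin n)) :
    |(∫ ω, Real.exp (l * ∑ i ∈ s, clampC C (Z i ω))) -
        ∏ i ∈ s, ∫ ω, Real.exp (l * clampC C (Z i ω))|
      ≤ l ^ 2 * Real.exp (l * s.card * C) *
          ∑ i ∈ s, ∑ j ∈ s.filter (fun j => i < j),
            covO (fun ω => clampC C (Z i ω)) (fun ω => clampC C (Z j ω)) := by
  classical
  induction s using Finset.induction_on with
  | empty => simp
  | insert a s ha ih =>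
    -- notation
    set W : Fin n → Ω → ℝ := fun i ω => clampC C (Z i ω) with hW
    set c : Fin n → Fin n → ℝ := fun i j => covO (W i) (W j) with hc
    have hcsymm : ∀ i j, c i j = c j i := fun i j => covO_comm _ _
    have hcnonneg : ∀ i j : Fin n, 0 ≤ c i j := fun i j =>
      covWW_nonneg Z hmeas C hC hNA i j
    set F : Finset (Fin n) → Ω → ℝ :=
      fun t ω => Real.exp (l * ∑ i ∈ t, W i ω) with hF
    set G : Fin n → Ω → ℝ := fun i ω => Real.exp (l * W i ω) with hG
    have hFsplit : ∀ ω, F (insert a s) ω = F s ω * G a ω := by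
      intro ω
      rw [hF]
      simp only [Finset.sum_insert ha]
      rw [mul_add, Real.exp_add, mul_comm]
    have hbF : IsBddM (F s) := bddF Z hmeas C hC l hl s
    have hbG : IsBddM (G a) := by
      have := bddF Z hmeas C hC l hl {a}
      simpa using this
    -- integral of product decomposition
    have hint : (∫ ω, F (insert a s) ω) = covO (F s) (G a) + (∫ ω, F s ω) * (∫ ω, G a ω) := by
      rw [integral_congr_ae (Filter.Eventually.of_forall hFsplit)]
      unfold covO
      ring
    -- bounds on ∫ G a
    have hGnonneg : 0 ≤ ∫ ω, G a ω :=
      integral_nonneg fun ω => (Real.exp_pos _).le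
    have hGle : (∫ ω, G a ω) ≤ Real.exp (l * C) := by
      calc (∫ ω, G a ω) ≤ ∫ _ω, Real.exp (l * C) := by
            refine integral_mono hbG.integrable (integrable_const _) fun ω => ?_
            exact Real.exp_le_exp.2 (mul_le_mul_of_nonneg_left
              (abs_le.1 (abs_clampC_le hC.le _)).2 hl.le)
        _ = Real.exp (l * C) := by simp
    -- covariance bounds
    have hcov0 : 0 ≤ covO (F s) (G a) := covFG_nonneg Z hmeas C hC hNA l hl s a
    have hcov1 : covO (F s) (G a) ≤
        l ^ 2 * Real.exp (l * (s.card + 1) * C) * ∑ i ∈ s, c i a :=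
      newman_bound Z hmeas C hC hNA l hl s a
    -- pair sum identity
    have hpair := pairSum_insert c hcsymm s a ha
    -- cardinality
    have hcard : ((insert a s).card : ℝ) = s.card + 1 := by
      rw [Finset.card_insert_of_notMem ha]
      push_cast
      ring
    -- main estimate
    have hprod : (∏ i ∈ insert a s, ∫ ω, G i ω) = (∫ ω, G a ω) * ∏ i ∈ s, ∫ ω, G i ω :=
      Finset.prod_insert ha
    have step : |(∫ ω, F (insert a s) ω) - ∏ i ∈ insert a s, ∫ ω, G i ω|
        ≤ covO (F s) (G a) + (∫ ω, G a ω) * |(∫ ω, F s ω) - ∏ i ∈ s, ∫ ω, G i ω| := by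
      rw [hint, hprod]
      have : covO (F s) (G a) + (∫ ω, F s ω) * (∫ ω, G a ω) -
          (∫ ω, G a ω) * ∏ i ∈ s, ∫ ω, G i ω
          = covO (F s) (G a) + (∫ ω, G a ω) * ((∫ ω, F s ω) - ∏ i ∈ s, ∫ ω, G i ω) := by
        ring
      rw [this]
      calc |covO (F s) (G a) + (∫ ω, G a ω) * ((∫ ω, F s ω) - ∏ i ∈ s, ∫ ω, G i ω)|
          ≤ |covO (F s) (G a)| + |(∫ ω, G a ω) * ((∫ ω, F s ω) - ∏ i ∈ s, ∫ ω, G i ω)| :=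
            abs_add_le _ _
        _ = covO (F s) (G a) + (∫ ω, G a ω) * |(∫ ω, F s ω) - ∏ i ∈ s, ∫ ω, G i ω| := by
            rw [abs_of_nonneg hcov0, abs_mul, abs_of_nonneg hGnonneg]
    have hPs_nonneg : 0 ≤ ∑ i ∈ s, ∑ j ∈ s.filter (fun j => i < j), c i j :=
      Finset.sum_nonneg fun i _ => Finset.sum_nonneg fun j _ => hcnonneg i j
    have hGIH : (∫ ω, G a ω) * |(∫ ω, F s ω) - ∏ i ∈ s, ∫ ω, G i ω|
        ≤ Real.exp (l * C) * (l ^ 2 * Real.exp (l * s.card * C) *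
            ∑ i ∈ s, ∑ j ∈ s.filter (fun j => i < j), c i j) := by
      have habs : 0 ≤ |(∫ ω, F s ω) - ∏ i ∈ s, ∫ ω, G i ω| := abs_nonneg _
      calc (∫ ω, G a ω) * |(∫ ω, F s ω) - ∏ i ∈ s, ∫ ω, G i ω|
          ≤ Real.exp (l * C) * |(∫ ω, F s ω) - ∏ i ∈ s, ∫ ω, G i ω| :=
            mul_le_mul_of_nonneg_right hGle habs
        _ ≤ Real.exp (l * C) * (l ^ 2 * Real.exp (l * s.card * C) *
            ∑ i ∈ s, ∑ j ∈ s.filter (fun j => i < j), c i j) :=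
            mul_le_mul_of_nonneg_left ih (Real.exp_pos _).le
    have hexp : Real.exp (l * C) * Real.exp (l * s.card * C)
        = Real.exp (l * (s.card + 1) * C) := by
      rw [← Real.exp_add]
      congr 1
      ring
    calc |(∫ ω, F (insert a s) ω) - ∏ i ∈ insert a s, ∫ ω, G i ω|
        ≤ covO (F s) (G a) + (∫ ω, G a ω) * |(∫ ω, F s ω) - ∏ i ∈ s, ∫ ω, G i ω| := step
      _ ≤ l ^ 2 * Real.exp (l * (s.card + 1) * C) * ∑ i ∈ s, c i a +
          Real.exp (l * C) * (l ^ 2 * Real.exp (l * s.card * C) *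
            ∑ i ∈ s, ∑ j ∈ s.filter (fun j => i < j), c i j) :=
          add_le_add hcov1 hGIH
      _ = l ^ 2 * Real.exp (l * (s.card + 1) * C) *
          ((∑ i ∈ s, ∑ j ∈ s.filter (fun j => i < j), c i j) + ∑ i ∈ s, c i a) := by
          rw [← hexp]
          ring
      _ = l ^ 2 * Real.exp (l * ((insert a s).card : ℝ) * C) *
          ∑ i ∈ insert a s, ∑ j ∈ (insert a s).filter (fun j => i < j), c i j := by
          rw [hpair, hcard]

end Induct

/-- **Covariance bound for non-negatively associated bounded random variables.**
If `Z 1, …, Z n` are non-negatively associated with `|Z i| ≤ C` a.s., then for every `λ > 0`,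
`|E[exp(λ·Σᵢ Zᵢ)] − Πᵢ E[exp(λ·Zᵢ)]| ≤ λ²·exp(n·λ·C)·Σ_{i<j} Cov(Zᵢ, Zⱼ)`. -/
theorem nonneg_associated_mgf_product_bound
    {Ω : Type*} [MeasureSpace Ω] [IsProbabilityMeasure (ℙ : Measure Ω)]
    (n : ℕ) (Z : Fin n → Ω → ℝ) (hmeas : ∀ i, Measurable (Z i))
    (C : ℝ) (hC : 0 < C)
    (hbdd : ∀ i, ∀ᵐ ω, |Z i ω| ≤ C)
    (hNA : NonNegativelyAssociated Z)
    (l : ℝ) (hl : 0 < l) :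
    |(∫ ω, Real.exp (l * ∑ i, Z i ω)) - ∏ i, ∫ ω, Real.exp (l * Z i ω)| ≤
      l ^ 2 * Real.exp (n * l * C) *
        ∑ i, ∑ j ∈ Finset.univ.filter (fun j => i < j),
          ((∫ ω, Z i ω * Z j ω) - (∫ ω, Z i ω) * (∫ ω, Z j ω)) := by
  have hball : ∀ᵐ ω, ∀ i, |Z i ω| ≤ C := (MeasureTheory.ae_all_iff).2 hbdd
  have h1 : (∫ ω, Real.exp (l * ∑ i, Z i ω))
      = ∫ ω, Real.exp (l * ∑ i, clampC C (Z i ω)) := by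
    refine integral_congr_ae (hball.mono fun ω h => ?_)
    have hs : (∑ i, Z i ω) = ∑ i, clampC C (Z i ω) :=
      Finset.sum_congr rfl fun i _ => (clampC_eq (h i)).symm
    dsimp only
    rw [hs]
  have h2 : ∀ i : Fin n, (∫ ω, Real.exp (l * Z i ω))
      = ∫ ω, Real.exp (l * clampC C (Z i ω)) := fun i =>
    integral_congr_ae ((hbdd i).mono fun ω h => by dsimp only; rw [clampC_eq h])
  have h3 : ∀ i j : Fin n, ((∫ ω, Z i ω * Z j ω) - (∫ ω, Z i ω) * (∫ ω, Z j ω))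
      = covO (fun ω => clampC C (Z i ω)) (fun ω => clampC C (Z j ω)) := by
    intro i j
    unfold covO
    have e1 : (∫ ω, Z i ω * Z j ω) = ∫ ω, clampC C (Z i ω) * clampC C (Z j ω) :=
      integral_congr_ae (hball.mono fun ω h => by dsimp only; rw [clampC_eq (h i), clampC_eq (h j)])
    have e2 : (∫ ω, Z i ω) = ∫ ω, clampC C (Z i ω) :=
      integral_congr_ae ((hbdd i).mono fun ω h => (clampC_eq h).symm)
    have e3 : (∫ ω, Z j ω) = ∫ ω, clampC C (Z j ω) :=
      integral_congr_ae ((hbdd j).mono fun ω h => (clampC_eq h).symm)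
    rw [e1, e2, e3]
  have hprod : (∏ i, ∫ ω, Real.exp (l * Z i ω))
      = ∏ i, ∫ ω, Real.exp (l * clampC C (Z i ω)) :=
    Finset.prod_congr rfl fun i _ => h2 i
  have hsum : (∑ i, ∑ j ∈ Finset.univ.filter (fun j => i < j),
        ((∫ ω, Z i ω * Z j ω) - (∫ ω, Z i ω) * (∫ ω, Z j ω)))
      = ∑ i, ∑ j ∈ Finset.univ.filter (fun j => i < j),
        covO (fun ω => clampC C (Z i ω)) (fun ω => clampC C (Z j ω)) :=
    Finset.sum_congr rfl fun i _ => Finset.sum_congr rfl fun j _ => h3 i j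
  rw [h1, hprod, hsum]
  have hexp : Real.exp (↑n * l * C)
      = Real.exp (l * (((Finset.univ : Finset (Fin n)).card : ℝ)) * C) := by
    congr 1
    rw [Finset.card_univ, Fintype.card_fin]
    ring
  rw [hexp]
  exact main_induction Z hmeas C hC hNA l hl Finset.univ
end

section
/- Let b be a Bernoulli(q) random variable with q ∈ (0,1) and q ≠ 1/2, and set σ²_opt = ((1/2) − q) / log((1/q) − 1). Then: (i) b is σ²_opt-subGaussian, i.e., E[exp(λ(b − q))] ≤ exp(σ²_opt·λ²/2) for all real λ; and (ii) σ²_opt is optimal: for every σ² > 0 such that E[exp(λ(b − q))] ≤ exp(σ²·λ²/2) holds for all real λ, one has σ² ≥ σ²_opt. -/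
open MeasureTheory ProbabilityTheory Real

noncomputable def ksD (q l : ℝ) : ℝ := 1 - q + q * Real.exp l
noncomputable def ksF (q c l : ℝ) : ℝ := c * l ^ 2 / 2 + q * l - Real.log (ksD q l)
noncomputable def ksF1 (q c l : ℝ) : ℝ := c * l + q - q * Real.exp l / ksD q l
noncomputable def ksF2 (q c l : ℝ) : ℝ := c - q * (1 - q) * Real.exp l / (ksD q l) ^ 2

lemma ksD_pos {q : ℝ} (h0 : 0 < q) (h1 : q < 1) (l : ℝ) : 0 < ksD q l := by
  have := Real.exp_pos l
  unfold ksD; nlinarith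

lemma hasDerivAt_ksD {q : ℝ} (l : ℝ) : HasDerivAt (ksD q) (q * Real.exp l) l := by
  exact ((Real.hasDerivAt_exp l).const_mul q).const_add (1 - q)

lemma hasDerivAt_ksF {q c : ℝ} (h0 : 0 < q) (h1 : q < 1) (l : ℝ) :
    HasDerivAt (ksF q c) (ksF1 q c l) l := by
  have hD := ksD_pos h0 h1 l
  have h3 : HasDerivAt (fun l => Real.log (ksD q l)) ((ksD q l)⁻¹ * (q * Real.exp l)) l :=
    (Real.hasDerivAt_log hD.ne').comp l (hasDerivAt_ksD l)
  have h1' : HasDerivAt (fun l : ℝ => c * l ^ 2 / 2) (c * (2 * l ^ 1) / 2) l :=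
    ((hasDerivAt_pow 2 l).const_mul c).div_const 2
  have h2' : HasDerivAt (fun l : ℝ => q * l) q l := by
    simpa using (hasDerivAt_id l).const_mul q
  have := (h1'.add h2').sub h3
  refine this.congr_deriv ?_
  unfold ksF1
  field_simp

lemma hasDerivAt_ksF1 {q c : ℝ} (h0 : 0 < q) (h1 : q < 1) (l : ℝ) :
    HasDerivAt (ksF1 q c) (ksF2 q c l) l := by
  have hD := ksD_pos h0 h1 l
  have h3 : HasDerivAt (fun l => q * Real.exp l / ksD q l)
      ((q * Real.exp l * ksD q l - q * Real.exp l * (q * Real.exp l)) / (ksD q l) ^ 2) l :=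
    ((Real.hasDerivAt_exp l).const_mul q).div (hasDerivAt_ksD l) hD.ne'
  have h1' : HasDerivAt (fun l : ℝ => c * l + q) c l := by
    simpa using ((hasDerivAt_id l).const_mul c).add_const q
  have := h1'.sub h3
  refine this.congr_deriv ?_
  unfold ksF2 ksD
  have : 1 - q + q * Real.exp l - q * Real.exp l = 1 - q := by ring
  field_simp
  ring

lemma deriv_ksF {q c : ℝ} (h0 : 0 < q) (h1 : q < 1) : deriv (ksF q c) = ksF1 q c := by
  funext l; exact (hasDerivAt_ksF h0 h1 l).deriv

lemma deriv_ksF1 {q c : ℝ} (h0 : 0 < q) (h1 : q < 1) : deriv (ksF1 q c) = ksF2 q c := by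
  funext l; exact (hasDerivAt_ksF1 h0 h1 l).deriv

lemma ks_c_gt {q : ℝ} (h0 : 0 < q) (h2 : q < 1 / 2) :
    q * (1 - q) < (1 / 2 - q) / Real.log ((1 - q) / q) := by
  have h1 : q < 1 := by linarith
  have hq1' : (0:ℝ) < 1 - q := by linarith
  have hxpos : (0:ℝ) < (1 - q) / q := by positivity
  have hx1 : (1:ℝ) < (1 - q) / q := by
    rw [lt_div_iff₀ h0]; linarith
  have ht : 0 < Real.log ((1 - q) / q) := Real.log_pos hx1
  set t := Real.log ((1 - q) / q) with hdef
  have hx : Real.exp t = (1 - q) / q := Real.exp_log hxpos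
  have hxi : Real.exp (-t) = q / (1 - q) := by
    rw [Real.exp_neg, hx, inv_div]
  have hsinh : t < Real.sinh t := Real.self_lt_sinh_iff.mpr ht
  rw [Real.sinh_eq, hx, hxi] at hsinh
  rw [lt_div_iff₀ ht]
  have hq1 : (0:ℝ) < 1 - q := by linarith
  have key : t < (1 - 2*q) / (2 * q * (1 - q)) := by
    have heq : ((1 - q) / q - q / (1 - q)) / 2 = (1 - 2*q) / (2 * q * (1 - q)) := by
      field_simp; ring
    linarith [heq ▸ hsinh]
  have h2' : q * (1 - q) * ((1 - 2*q) / (2 * q * (1 - q))) = (1 - 2*q)/2 := by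
    field_simp
  nlinarith [mul_lt_mul_of_pos_left key (by positivity : (0:ℝ) < q * (1 - q))]

lemma ks_exp_le_sq {q u : ℝ} (h0 : 0 < q) (h2 : q < 1 / 2) (hu : 0 < u)
    (hl : u ≤ 1 ∨ ((1 - q) / q) ^ 2 ≤ u) : u ≤ (1 - q + q * u) ^ 2 := by
  rcases hl with hl | hl
  · nlinarith [mul_nonneg (sub_nonneg.2 hl) (by linarith : (0:ℝ) ≤ 1 - 2*q),
      sq_nonneg (q * (1 - u))]
  · have hx2 : q ^ 2 * (((1 - q) / q) ^ 2) = (1 - q) ^ 2 := by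
      field_simp
    have hs : (1 - q) ^ 2 ≤ q ^ 2 * u := by
      calc (1 - q) ^ 2 = q ^ 2 * (((1 - q) / q) ^ 2) := hx2.symm
        _ ≤ q ^ 2 * u := by nlinarith [sq_nonneg q]
    nlinarith [sq_nonneg (q ^ 2 * u - (1 - q) ^ 2),
      mul_nonneg (sub_nonneg.2 hs) (by linarith : (0:ℝ) ≤ 1 - 2*q), mul_pos h0 h0]

lemma ksF2_nonneg_outer {q c : ℝ} (h0 : 0 < q) (h2 : q < 1 / 2)
    (hc : q * (1 - q) ≤ c) {l : ℝ}
    (hl : Real.exp l ≤ 1 ∨ ((1 - q) / q) ^ 2 ≤ Real.exp l) : 0 ≤ ksF2 q c l := by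
  have h1 : q < 1 := by linarith
  have hD := ksD_pos h0 h1 l
  have hsq : (0:ℝ) < (ksD q l) ^ 2 := by positivity
  have hkey := ks_exp_le_sq h0 h2 (Real.exp_pos l) hl
  have : q * (1 - q) * Real.exp l / (ksD q l) ^ 2 ≤ q * (1 - q) := by
    rw [div_le_iff₀ hsq]
    have : (0:ℝ) ≤ q * (1 - q) := by nlinarith
    unfold ksD at *
    nlinarith
  unfold ksF2
  linarith

lemma ksF2_anti_mid {q c : ℝ} (h0 : 0 < q) (h2 : q < 1 / 2) {l1 l2 : ℝ}
    (h12 : l1 ≤ l2) (hup : Real.exp l2 ≤ (1 - q) / q) : ksF2 q c l2 ≤ ksF2 q c l1 := by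
  have h1 : q < 1 := by linarith
  have hu1 := Real.exp_pos l1
  have hu2 := Real.exp_pos l2
  have hule : Real.exp l1 ≤ Real.exp l2 := Real.exp_le_exp.2 h12
  have hq1 : q * Real.exp l2 ≤ 1 - q := by
    rw [← le_div_iff₀' h0]; exact hup
  have hq2 : q * Real.exp l1 ≤ 1 - q := by nlinarith
  have hD1 := ksD_pos h0 h1 l1
  have hD2 := ksD_pos h0 h1 l2
  unfold ksF2
  have key : Real.exp l1 * (ksD q l2) ^ 2 ≤ Real.exp l2 * (ksD q l1) ^ 2 := by
    unfold ksD
    nlinarith [mul_nonneg (sub_nonneg.2 hule)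
      (sub_nonneg.2 (mul_le_mul hq2 hq1 (by positivity) (by linarith)))]
  have : q * (1 - q) * Real.exp l1 / (ksD q l1) ^ 2 ≤ q * (1 - q) * Real.exp l2 / (ksD q l2) ^ 2 := by
    rw [div_le_div_iff₀ (by positivity) (by positivity)]
    nlinarith [key, (by nlinarith : (0:ℝ) ≤ q * (1 - q))]
  linarith

lemma ksF2_mono_mid {q c : ℝ} (h0 : 0 < q) (h2 : q < 1 / 2) {l1 l2 : ℝ}
    (h12 : l1 ≤ l2) (hlo : (1 - q) / q ≤ Real.exp l1) : ksF2 q c l1 ≤ ksF2 q c l2 := by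
  have h1 : q < 1 := by linarith
  have hu1 := Real.exp_pos l1
  have hu2 := Real.exp_pos l2
  have hule : Real.exp l1 ≤ Real.exp l2 := Real.exp_le_exp.2 h12
  have hq1 : 1 - q ≤ q * Real.exp l1 := by
    rw [← div_le_iff₀' h0]; exact hlo
  have hq2 : 1 - q ≤ q * Real.exp l2 := by nlinarith
  have hD1 := ksD_pos h0 h1 l1
  have hD2 := ksD_pos h0 h1 l2
  unfold ksF2
  have key : Real.exp l2 * (ksD q l1) ^ 2 ≤ Real.exp l1 * (ksD q l2) ^ 2 := by
    unfold ksD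
    nlinarith [mul_nonneg (sub_nonneg.2 hule)
      (sub_nonneg.2 (mul_le_mul hq1 hq2 (by linarith) (by positivity)))]
  have : q * (1 - q) * Real.exp l2 / (ksD q l2) ^ 2 ≤ q * (1 - q) * Real.exp l1 / (ksD q l1) ^ 2 := by
    rw [div_le_div_iff₀ (by positivity) (by positivity)]
    nlinarith [key, (by nlinarith : (0:ℝ) ≤ q * (1 - q))]
  linarith

lemma ksF_nonneg {q : ℝ} (h0 : 0 < q) (h2 : q < 1 / 2) (l : ℝ) :
    0 ≤ ksF q ((1 / 2 - q) / Real.log ((1 - q) / q)) l := by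
  have h1 : q < 1 := by linarith
  have hq1 : (0:ℝ) < 1 - q := by linarith
  have hxpos : (0:ℝ) < (1 - q) / q := by positivity
  have hx1 : (1:ℝ) < (1 - q) / q := by rw [lt_div_iff₀ h0]; linarith
  set t := Real.log ((1 - q) / q) with htdef
  have ht : 0 < t := Real.log_pos hx1
  set c := (1 / 2 - q) / t with hcdef
  have hx : Real.exp t = (1 - q) / q := Real.exp_log hxpos
  have hct : c * t = 1 / 2 - q := by rw [hcdef]; field_simp
  have hcq : q * (1 - q) < c := ks_c_gt h0 h2
  have hexp2t : Real.exp (2 * t) = ((1 - q) / q) ^ 2 := by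
    rw [two_mul, Real.exp_add, hx]; ring
  have hD_t : ksD q t = 2 * (1 - q) := by unfold ksD; rw [hx]; field_simp; ring
  have hD_2t : ksD q (2 * t) = (1 - q) / q := by
    unfold ksD; rw [hexp2t]; field_simp; ring
  have hF1_0 : ksF1 q c 0 = 0 := by
    unfold ksF1 ksD; rw [Real.exp_zero]
    have h : 1 - q + q * 1 = 1 := by ring
    rw [h]; ring
  have hF1_t : ksF1 q c t = 0 := by
    unfold ksF1; rw [hx, hD_t, hct]; field_simp; ring
  have hF1_2t : ksF1 q c (2 * t) = 0 := by
    have hct2 : c * (2 * t) = 1 - 2 * q := by rw [hcdef]; field_simp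
    unfold ksF1; rw [hexp2t, hD_2t, hct2]; field_simp; ring
  have hF_0 : ksF q c 0 = 0 := by
    unfold ksF ksD; rw [Real.exp_zero]
    have h : 1 - q + q * 1 = 1 := by ring
    rw [h, Real.log_one]; ring
  have hF_2t : ksF q c (2 * t) = 0 := by
    unfold ksF; rw [hD_2t, ← htdef]
    have h : c * (2 * t) ^ 2 / 2 = 2 * t * (c * t) := by ring
    rw [h, hct]; ring
  have hdF : ∀ x, HasDerivAt (ksF q c) (ksF1 q c x) x := hasDerivAt_ksF h0 h1
  have hdF1 : ∀ x, HasDerivAt (ksF1 q c) (ksF2 q c x) x := hasDerivAt_ksF1 h0 h1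
  have hdiffF : Differentiable ℝ (ksF q c) := fun x => (hdF x).differentiableAt
  have hdiffF1 : Differentiable ℝ (ksF1 q c) := fun x => (hdF1 x).differentiableAt
  have hderivF : deriv (ksF q c) = ksF1 q c := deriv_ksF h0 h1
  have hderivF1 : deriv (ksF1 q c) = ksF2 q c := deriv_ksF1 h0 h1
  have r1 : ∀ l ≤ (0:ℝ), 0 ≤ ksF q c l := by
    intro l hl
    have mono1 : MonotoneOn (ksF1 q c) (Set.Iic 0) := by
      apply monotoneOn_of_deriv_nonneg (convex_Iic 0) hdiffF1.continuous.continuousOn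
        hdiffF1.differentiableOn
      intro x hx
      rw [hderivF1]
      rw [interior_Iic] at hx
      exact ksF2_nonneg_outer h0 h2 hcq.le
        (Or.inl (Real.exp_le_one_iff.2 (le_of_lt hx)))
    have f1np : ∀ x ∈ Set.Iic (0:ℝ), ksF1 q c x ≤ 0 := by
      intro x hx
      have := mono1 hx (Set.mem_Iic.2 le_rfl) hx
      rwa [hF1_0] at this
    have anti : AntitoneOn (ksF q c) (Set.Iic 0) := by
      apply antitoneOn_of_deriv_nonpos (convex_Iic 0) hdiffF.continuous.continuousOn
        hdiffF.differentiableOn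
      intro x hx
      rw [hderivF, interior_Iic] at *
      exact f1np x (Set.mem_Iic.2 (le_of_lt hx))
    have := anti (Set.mem_Iic.2 hl) (Set.mem_Iic.2 le_rfl) hl
    rwa [hF_0] at this
  have r4 : ∀ l, 2 * t ≤ l → 0 ≤ ksF q c l := by
    intro l hl
    have mono1 : MonotoneOn (ksF1 q c) (Set.Ici (2 * t)) := by
      apply monotoneOn_of_deriv_nonneg (convex_Ici _) hdiffF1.continuous.continuousOn
        hdiffF1.differentiableOn
      intro x hx
      rw [hderivF1]
      refine ksF2_nonneg_outer h0 h2 hcq.le (Or.inr ?_)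
      rw [interior_Ici] at hx
      rw [← hexp2t]
      exact Real.exp_le_exp.2 (le_of_lt hx)
    have f1nn : ∀ x ∈ Set.Ici (2 * t), 0 ≤ ksF1 q c x := by
      intro x hx
      have := mono1 (Set.mem_Ici.2 le_rfl) hx hx
      rwa [hF1_2t] at this
    have mono : MonotoneOn (ksF q c) (Set.Ici (2 * t)) := by
      apply monotoneOn_of_deriv_nonneg (convex_Ici _) hdiffF.continuous.continuousOn
        hdiffF.differentiableOn
      intro x hx
      rw [hderivF, interior_Ici] at *
      exact f1nn x (Set.mem_Ici.2 (le_of_lt hx))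
    have := mono (Set.mem_Ici.2 le_rfl) (Set.mem_Ici.2 hl) hl
    rw [hF_2t] at this
    exact this
  have r2 : ∀ l ∈ Set.Icc 0 t, 0 ≤ ksF q c l := by
    intro l hl
    have conc : ConcaveOn ℝ (Set.Icc 0 t) (ksF1 q c) := by
      apply AntitoneOn.concaveOn_of_deriv (convex_Icc 0 t) hdiffF1.continuous.continuousOn
        hdiffF1.differentiableOn
      intro a ha b hb hab
      rw [hderivF1]
      rw [interior_Icc] at ha hb
      exact ksF2_anti_mid h0 h2 hab (hx ▸ Real.exp_le_exp.2 hb.2.le)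
    have f1nn : ∀ x ∈ Set.Icc 0 t, 0 ≤ ksF1 q c x := by
      intro x hxx
      have hseg : x ∈ segment ℝ (0:ℝ) t := by rwa [segment_eq_Icc ht.le]
      have := conc.ge_on_segment (Set.left_mem_Icc.2 ht.le) (Set.right_mem_Icc.2 ht.le) hseg
      rwa [hF1_0, hF1_t, min_self] at this
    have mono : MonotoneOn (ksF q c) (Set.Icc 0 t) := by
      apply monotoneOn_of_deriv_nonneg (convex_Icc 0 t) hdiffF.continuous.continuousOn
        hdiffF.differentiableOn
      intro x hxx
      rw [hderivF]
      rw [interior_Icc] at hxx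
      exact f1nn x ⟨hxx.1.le, hxx.2.le⟩
    have := mono (Set.left_mem_Icc.2 ht.le) hl hl.1
    rwa [hF_0] at this
  have r3 : ∀ l ∈ Set.Icc t (2 * t), 0 ≤ ksF q c l := by
    intro l hl
    have htt : t ≤ 2 * t := by linarith
    have conv : ConvexOn ℝ (Set.Icc t (2 * t)) (ksF1 q c) := by
      apply MonotoneOn.convexOn_of_deriv (convex_Icc _ _) hdiffF1.continuous.continuousOn
        hdiffF1.differentiableOn
      intro a ha b hb hab
      rw [hderivF1]
      rw [interior_Icc] at ha hb
      exact ksF2_mono_mid h0 h2 hab (hx ▸ Real.exp_le_exp.2 ha.1.le)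
    have f1np : ∀ x ∈ Set.Icc t (2 * t), ksF1 q c x ≤ 0 := by
      intro x hxx
      have hseg : x ∈ segment ℝ t (2 * t) := by rwa [segment_eq_Icc htt]
      have := conv.le_on_segment (Set.left_mem_Icc.2 htt) (Set.right_mem_Icc.2 htt) hseg
      rwa [hF1_t, hF1_2t, max_self] at this
    have anti : AntitoneOn (ksF q c) (Set.Icc t (2 * t)) := by
      apply antitoneOn_of_deriv_nonpos (convex_Icc _ _) hdiffF.continuous.continuousOn
        hdiffF.differentiableOn
      intro x hxx
      rw [hderivF]
      rw [interior_Icc] at hxx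
      exact f1np x ⟨hxx.1.le, hxx.2.le⟩
    have := anti hl (Set.right_mem_Icc.2 htt) hl.2
    rw [hF_2t] at this
    exact this
  rcases le_or_gt l 0 with h | h
  · exact r1 l h
  rcases le_or_gt l t with h' | h'
  · exact r2 l ⟨h.le, h'⟩
  rcases le_or_gt l (2 * t) with h'' | h''
  · exact r3 l ⟨h'.le, h''⟩
  · exact r4 l h''.le

lemma ks_core {q : ℝ} (h0 : 0 < q) (h2 : q < 1 / 2) (l : ℝ) :
    (1 - q) * Real.exp (l * (0 - q)) + q * Real.exp (l * (1 - q)) ≤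
      Real.exp ((1 / 2 - q) / Real.log (1 / q - 1) * l ^ 2 / 2) := by
  have h1 : q < 1 := by linarith
  have h1q : 1 / q - 1 = (1 - q) / q := by field_simp
  rw [h1q]
  set c := (1 / 2 - q) / Real.log ((1 - q) / q) with hcdef
  have hF := ksF_nonneg h0 h2 l
  have hD := ksD_pos h0 h1 l
  have hlog : Real.log (ksD q l) ≤ c * l ^ 2 / 2 + q * l := by
    unfold ksF at hF; linarith
  have hDle : ksD q l ≤ Real.exp (c * l ^ 2 / 2 + q * l) :=
    (Real.log_le_iff_le_exp hD).1 hlog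
  have hlhs : (1 - q) * Real.exp (l * (0 - q)) + q * Real.exp (l * (1 - q)) =
      Real.exp (-(q * l)) * ksD q l := by
    unfold ksD
    rw [show l * (0 - q) = -(q * l) by ring, show l * (1 - q) = -(q * l) + l by ring,
      Real.exp_add]
    ring
  rw [hlhs]
  calc Real.exp (-(q * l)) * ksD q l
      ≤ Real.exp (-(q * l)) * Real.exp (c * l ^ 2 / 2 + q * l) :=
        mul_le_mul_of_nonneg_left hDle (Real.exp_pos _).le
    _ = Real.exp (c * l ^ 2 / 2) := by
        rw [← Real.exp_add]; congr 1; ring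

lemma ks_eq {q : ℝ} (h0 : 0 < q) (h1 : q < 1) (hq2 : q ≠ 1 / 2) :
    (1 - q) * Real.exp ((2 * Real.log (1 / q - 1)) * (0 - q)) +
      q * Real.exp ((2 * Real.log (1 / q - 1)) * (1 - q)) =
    Real.exp ((1 / 2 - q) / Real.log (1 / q - 1) * (2 * Real.log (1 / q - 1)) ^ 2 / 2) := by
  have hq1 : (0:ℝ) < 1 - q := by linarith
  have h1q : 1 / q - 1 = (1 - q) / q := by field_simp
  rw [h1q]
  set t := Real.log ((1 - q) / q) with htdef
  have hx : Real.exp t = (1 - q) / q := Real.exp_log (by positivity)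
  have hxn : Real.exp (-t) = q / (1 - q) := by rw [Real.exp_neg, hx, inv_div]
  have ht0 : t ≠ 0 := by
    intro h
    rw [h, Real.exp_zero] at hx
    have : q = 1 / 2 := by field_simp at hx; linarith
    exact hq2 this
  rw [show (2 * t) * (0 - q) = t * (1 - 2 * q) + -t by ring,
    show (2 * t) * (1 - q) = t * (1 - 2 * q) + t by ring,
    Real.exp_add, Real.exp_add, hx, hxn,
    show (1 / 2 - q) / t * (2 * t) ^ 2 / 2 = t * (1 - 2 * q) by field_simp]
  field_simp
  ring

lemma bernoulli_mgf {Ω : Type*} [MeasureSpace Ω] [IsProbabilityMeasure (ℙ : Measure Ω)]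
    (q : ℝ) (hq : q ∈ Set.Ioo (0 : ℝ) 1)
    (b : Ω → ℝ) (hbmeas : Measurable b)
    (hbval : ∀ ω, b ω = 0 ∨ b ω = 1)
    (hbdist : ℙ {ω | b ω = 1} = ENNReal.ofReal q) (l : ℝ) :
    (∫ ω, Real.exp (l * (b ω - q))) =
      (1 - q) * Real.exp (l * (0 - q)) + q * Real.exp (l * (1 - q)) := by
  set A := {ω | b ω = 1} with hAdef
  have hA : MeasurableSet A := hbmeas (measurableSet_singleton 1)
  have hμA : ℙ A = ENNReal.ofReal q := hbdist
  have hAc : ℙ Aᶜ = ENNReal.ofReal (1 - q) := by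
    rw [measure_compl hA (measure_ne_top _ _), hμA, measure_univ,
      ← ENNReal.ofReal_one, ← ENNReal.ofReal_sub _ hq.1.le]
  have hfun : (fun ω => Real.exp (l * (b ω - q))) =
      fun ω => Set.indicator A (fun _ => Real.exp (l * (1 - q))) ω +
        Set.indicator Aᶜ (fun _ => Real.exp (l * (0 - q))) ω := by
    funext ω
    rcases hbval ω with h | h
    · have hωA : ω ∉ A := by simp [hAdef, h]
      rw [Set.indicator_of_notMem hωA, Set.indicator_of_mem (Set.mem_compl hωA), h]
      ring
    · have hωA : ω ∈ A := h
      rw [Set.indicator_of_mem hωA,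
        Set.indicator_of_notMem (by simp [hωA] : ω ∉ Aᶜ), h]
      ring
  rw [hfun, integral_add ((integrable_const _).indicator hA)
    ((integrable_const _).indicator hA.compl),
    integral_indicator_const _ hA, integral_indicator_const _ hA.compl,
    measureReal_def, measureReal_def, hμA, hAc, ENNReal.toReal_ofReal hq.1.le,
    ENNReal.toReal_ofReal (by linarith [hq.2] : (0:ℝ) ≤ 1 - q)]
  simp only [smul_eq_mul]
  ring

/-- **Optimal proxy variance of a Bernoulli random variable.**
For a Bernoulli(q) random variable `b` with `q ∈ (0,1)`, `q ≠ 1/2`, set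
`σ²_opt = ((1/2) − q)/log((1/q) − 1)`. Then (i) `b` is `σ²_opt`-subGaussian, i.e.,
`E[exp(λ(b − q))] ≤ exp(σ²_opt·λ²/2)` for all real `λ`, and (ii) `σ²_opt` is optimal:
any `σ² > 0` with `E[exp(λ(b − q))] ≤ exp(σ²·λ²/2)` for all real `λ` satisfies
`σ² ≥ σ²_opt`. -/
theorem bernoulli_optimal_proxy_variance
    {Ω : Type*} [MeasureSpace Ω] [IsProbabilityMeasure (ℙ : Measure Ω)]
    (q : ℝ) (hq : q ∈ Set.Ioo (0 : ℝ) 1) (hq2 : q ≠ 1 / 2)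
    (b : Ω → ℝ) (hbmeas : Measurable b)
    (hbval : ∀ ω, b ω = 0 ∨ b ω = 1)
    (hbdist : ℙ {ω | b ω = 1} = ENNReal.ofReal q) :
    (∀ l : ℝ, (∫ ω, Real.exp (l * (b ω - q))) ≤
        Real.exp ((1 / 2 - q) / Real.log (1 / q - 1) * l ^ 2 / 2)) ∧
      (∀ σsq : ℝ, 0 < σsq →
        (∀ l : ℝ, (∫ ω, Real.exp (l * (b ω - q))) ≤ Real.exp (σsq * l ^ 2 / 2)) →
        (1 / 2 - q) / Real.log (1 / q - 1) ≤ σsq) := by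
  obtain ⟨h0, h1⟩ := hq
  have hmgf := bernoulli_mgf q ⟨h0, h1⟩ b hbmeas hbval hbdist
  constructor
  · intro l
    rw [hmgf l]
    rcases lt_or_gt_of_ne hq2 with h2 | h2
    · exact ks_core h0 h2 l
    · -- symmetry: apply the core inequality with q' = 1 - q and l' = -l
      have h0' : 0 < 1 - q := by linarith
      have h2' : 1 - q < 1 / 2 := by linarith
      have key := ks_core h0' h2' (-l)
      have lhs_eq : (1 - (1 - q)) * Real.exp ((-l) * (0 - (1 - q))) +
          (1 - q) * Real.exp ((-l) * (1 - (1 - q))) =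
          (1 - q) * Real.exp (l * (0 - q)) + q * Real.exp (l * (1 - q)) := by
        rw [show (-l) * (0 - (1 - q)) = l * (1 - q) by ring,
          show (-l) * (1 - (1 - q)) = l * (0 - q) by ring]
        ring
      have hlog_eq : Real.log (1 / (1 - q) - 1) = - Real.log (1 / q - 1) := by
        have e1 : 1 / (1 - q) - 1 = (1 / q - 1)⁻¹ := by
          rw [show 1 / q - 1 = (1 - q) / q by field_simp]
          rw [inv_div]
          field_simp
          ring
        rw [e1, Real.log_inv]
      have rhs_eq : (1 / 2 - (1 - q)) / Real.log (1 / (1 - q) - 1) * (-l) ^ 2 / 2 =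
          (1 / 2 - q) / Real.log (1 / q - 1) * l ^ 2 / 2 := by
        rw [hlog_eq, show ((-l) ^ 2 : ℝ) = l ^ 2 by ring,
          show (1 / 2 - (1 - q) : ℝ) = -(1 / 2 - q) by ring, div_neg, neg_div, neg_neg]
      rw [lhs_eq, rhs_eq] at key
      exact key
  · intro σsq hσ hsub
    set t := Real.log (1 / q - 1) with htdef
    have hxpos : (0:ℝ) < 1 / q - 1 := by
      have : 1 < 1 / q := by rw [lt_div_iff₀ h0]; linarith
      linarith
    have ht0 : t ≠ 0 := by
      intro h
      have hx : Real.exp t = 1 / q - 1 := Real.exp_log hxpos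
      rw [h, Real.exp_zero] at hx
      have : q = 1 / 2 := by field_simp at hx; linarith
      exact hq2 this
    have key := hsub (2 * t)
    rw [hmgf (2 * t), ks_eq h0 h1 hq2] at key
    have hexp := Real.exp_le_exp.1 key
    have ht2 : 0 < t ^ 2 := by
      rcases ht0.lt_or_gt with h | h <;> nlinarith
    nlinarith [hexp, ht2]
end

section
/- Let b be a Bernoulli(q) random variable with q ∈ (0,1). Then b is strictly subGaussian — i.e., E[exp(λ(b − q))] ≤ exp(q(1−q)·λ²/2) holds for all real λ — if and only if q = 1/2. -/
open MeasureTheory ProbabilityTheory Real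


lemma cubic_le_exp (x : ℝ) : 1 + x + x^2/2 + x^3/6 ≤ Real.exp x := by
  set g : ℝ → ℝ := fun t => Real.exp t - (1 + t + t^2/2 + t^3/6) with hg
  set g1 : ℝ → ℝ := fun t => Real.exp t - (1 + t + t^2/2) with hg1
  have hdg : ∀ y : ℝ, HasDerivAt g (g1 y) y := by
    intro y
    have h1 : HasDerivAt (fun t : ℝ => 1 + t + t^2/2 + t^3/6) (1 + y + y^2/2) y := by
      have : HasDerivAt (fun t : ℝ => 1 + t + t^2/2 + t^3/6)
          (0 + 1 + (2 * y^1)/2 + (3 * y^2)/6) y := by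
        exact (((hasDerivAt_const y (1:ℝ)).add (hasDerivAt_id y)).add
          ((hasDerivAt_pow 2 y).div_const 2)).add ((hasDerivAt_pow 3 y).div_const 6)
      convert this using 1; ring
    exact (Real.hasDerivAt_exp y).sub h1
  have hdg1 : ∀ y : ℝ, HasDerivAt g1 (Real.exp y - (1 + y)) y := by
    intro y
    have h1 : HasDerivAt (fun t : ℝ => 1 + t + t^2/2) (1 + y) y := by
      have : HasDerivAt (fun t : ℝ => 1 + t + t^2/2) (0 + 1 + (2 * y^1)/2) y :=
        ((hasDerivAt_const y (1:ℝ)).add (hasDerivAt_id y)).add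
          ((hasDerivAt_pow 2 y).div_const 2)
      convert this using 1; ring
    exact (Real.hasDerivAt_exp y).sub h1
  have hg1mono : Monotone g1 := by
    apply monotone_of_deriv_nonneg (fun y => (hdg1 y).differentiableAt)
    intro y
    rw [(hdg1 y).deriv]
    have := Real.add_one_le_exp y
    linarith
  have hg10 : g1 0 = 0 := by simp [g1]
  have hgnonneg : 0 ≤ g x := by
    rcases le_or_gt 0 x with hx | hx
    · have hmono : MonotoneOn g (Set.Ici (0:ℝ)) := by
        apply monotoneOn_of_deriv_nonneg (convex_Ici 0)
          (fun y _ => (hdg y).differentiableAt.continuousAt.continuousWithinAt)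
          (fun y _ => (hdg y).differentiableAt.differentiableWithinAt)
        intro y hy
        rw [(hdg y).deriv, ← hg10]
        exact hg1mono (le_of_lt (by simpa using hy))
      have : g 0 ≤ g x := hmono (Set.self_mem_Ici) hx hx
      simpa [g] using this
    · have hmono : AntitoneOn g (Set.Iic (0:ℝ)) := by
        apply antitoneOn_of_deriv_nonpos (convex_Iic 0)
          (fun y _ => (hdg y).differentiableAt.continuousAt.continuousWithinAt)
          (fun y _ => (hdg y).differentiableAt.differentiableWithinAt)
        intro y hy
        rw [(hdg y).deriv, ← hg10]
        exact hg1mono (le_of_lt (by simpa using hy))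
      have : g 0 ≤ g x := hmono hx.le Set.self_mem_Iic hx.le
      simpa [g] using this
  simp only [g, sub_nonneg] at hgnonneg
  linarith

lemma bernoulli_integral
    {Ω : Type*} [MeasureSpace Ω] [IsProbabilityMeasure (ℙ : Measure Ω)]
    (q : ℝ) (hq : q ∈ Set.Ioo (0 : ℝ) 1)
    (b : Ω → ℝ) (hbmeas : Measurable b)
    (hbval : ∀ ω, b ω = 0 ∨ b ω = 1)
    (hbdist : ℙ {ω | b ω = 1} = ENNReal.ofReal q) (l : ℝ) :
    (∫ ω, Real.exp (l * (b ω - q))) =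
      q * Real.exp (l * (1 - q)) + (1 - q) * Real.exp (-(l * q)) := by
  set A : Set Ω := {ω | b ω = 1} with hAdef
  have hA : MeasurableSet A := hbmeas (measurableSet_singleton 1)
  set c1 : ℝ := Real.exp (l * (1 - q))
  set c0 : ℝ := Real.exp (-(l * q))
  have hfeq : (fun ω => Real.exp (l * (b ω - q)))
      = fun ω => A.indicator (fun _ => c1 - c0) ω + c0 := by
    funext ω
    rcases hbval ω with h | h
    · have hω : ω ∉ A := by simp [hAdef, h]
      simp [Set.indicator_of_notMem hω, h, c0]
    · have hω : ω ∈ A := by simp [hAdef, h]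
      simp [Set.indicator_of_mem hω, h, c1]
  rw [hfeq]
  rw [integral_add ((integrable_const (c1 - c0)).indicator hA) (integrable_const c0)]
  rw [integral_indicator_const _ hA, integral_const]
  have hμA : (ℙ A).toReal = q := by
    rw [hbdist, ENNReal.toReal_ofReal hq.1.le]
  rw [measureReal_def, hμA, measureReal_def, measure_univ]
  simp [smul_eq_mul]
  ring

/-- **A Bernoulli random variable is strictly subGaussian iff `q = 1/2`.**
For a Bernoulli(q) random variable `b` with `q ∈ (0,1)`,
`E[exp(λ(b − q))] ≤ exp(q(1−q)·λ²/2)` holds for all real `λ` if and only if `q = 1/2`. -/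
theorem bernoulli_strictly_subgaussian_iff
    {Ω : Type*} [MeasureSpace Ω] [IsProbabilityMeasure (ℙ : Measure Ω)]
    (q : ℝ) (hq : q ∈ Set.Ioo (0 : ℝ) 1)
    (b : Ω → ℝ) (hbmeas : Measurable b)
    (hbval : ∀ ω, b ω = 0 ∨ b ω = 1)
    (hbdist : ℙ {ω | b ω = 1} = ENNReal.ofReal q) :
    (∀ l : ℝ, (∫ ω, Real.exp (l * (b ω - q))) ≤
        Real.exp (q * (1 - q) * l ^ 2 / 2)) ↔ q = 1 / 2 := by
  obtain ⟨hq0, hq1⟩ := hq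
  constructor
  · intro H
    by_contra hne
    set l : ℝ := 1 - 2 * q with hl
    have hlne : l ≠ 0 := by
      intro h; apply hne; rw [hl] at h; linarith
    have hl2pos : 0 < l ^ 2 := by positivity
    have hl2lt : l ^ 2 < 1 := by nlinarith
    set a : ℝ := q * (1 - q) with ha
    have ha0 : 0 < a := by nlinarith
    have ha4 : a ≤ 1 / 4 := by nlinarith [sq_nonneg (q - 1/2)]
    have h := H l
    rw [bernoulli_integral q ⟨hq0, hq1⟩ b hbmeas hbval hbdist l] at h
    -- lower bounds on the two exponentials
    have hc1 := cubic_le_exp (l * (1 - q))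
    have hc0 := cubic_le_exp (-(l * q))
    -- combine: q * exp(l(1-q)) + (1-q) * exp(-(lq)) ≥ 1 + a l²/2 + a l⁴/6
    have hlow : 1 + a * l ^ 2 / 2 + a * l ^ 4 / 6 ≤
        q * Real.exp (l * (1 - q)) + (1 - q) * Real.exp (-(l * q)) := by
      have e1 : q * (1 + l * (1 - q) + (l * (1 - q)) ^ 2 / 2 + (l * (1 - q)) ^ 3 / 6)
          ≤ q * Real.exp (l * (1 - q)) := by
        apply mul_le_mul_of_nonneg_left hc1 hq0.le
      have e0 : (1 - q) * (1 + -(l * q) + (-(l * q)) ^ 2 / 2 + (-(l * q)) ^ 3 / 6)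
          ≤ (1 - q) * Real.exp (-(l * q)) := by
        apply mul_le_mul_of_nonneg_left hc0 (by linarith)
      have key : q * (1 + l * (1 - q) + (l * (1 - q)) ^ 2 / 2 + (l * (1 - q)) ^ 3 / 6)
          + (1 - q) * (1 + -(l * q) + (-(l * q)) ^ 2 / 2 + (-(l * q)) ^ 3 / 6)
          = 1 + a * l ^ 2 / 2 + a * l ^ 4 / 6 := by
        rw [ha, hl]; ring
      linarith
    -- upper bound on the subGaussian side
    have hy0 : 0 ≤ a * l ^ 2 / 2 := by positivity
    have hy1 : a * l ^ 2 / 2 < 1 := by nlinarith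
    have hub : Real.exp (a * l ^ 2 / 2) ≤ 1 / (1 - a * l ^ 2 / 2) :=
      Real.exp_bound_div_one_sub_of_interval hy0 hy1
    have hchain : 1 + a * l ^ 2 / 2 + a * l ^ 4 / 6 ≤ 1 / (1 - a * l ^ 2 / 2) := by
      calc 1 + a * l ^ 2 / 2 + a * l ^ 4 / 6
          ≤ q * Real.exp (l * (1 - q)) + (1 - q) * Real.exp (-(l * q)) := hlow
        _ ≤ Real.exp (a * l ^ 2 / 2) := h
        _ ≤ _ := hub
    have h1y : 0 < 1 - a * l ^ 2 / 2 := by linarith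
    rw [le_div_iff₀ h1y] at hchain
    clear_value a l
    clear hl ha hne h H hlow hub hc0 hc1 hbdist hbval hbmeas
    have hal4 : 0 < a * l ^ 4 := by positivity
    have t1 : 0 ≤ (1/4 - a) * (a * l ^ 4) :=
      mul_nonneg (by linarith) hal4.le
    have t2 : 0 ≤ (1 - l ^ 2) * (a * l ^ 4) * a :=
      mul_nonneg (mul_nonneg (by linarith) hal4.le) ha0.le
    nlinarith [hal4, t1, t2]
  · intro hq2
    subst hq2
    intro l
    rw [bernoulli_integral (1/2) ⟨by norm_num, by norm_num⟩ b hbmeas hbval hbdist l]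
    have hcosh := Real.cosh_le_exp_half_sq (l / 2)
    rw [Real.cosh_eq] at hcosh
    have e1 : 1/2 * Real.exp (l * (1 - 1/2)) + (1 - 1/2) * Real.exp (-(l * (1/2)))
        = (Real.exp (l/2) + Real.exp (-(l/2))) / 2 := by
      norm_num; ring_nf
    have e2 : (l / 2) ^ 2 / 2 = 1/2 * (1 - 1/2) * l ^ 2 / 2 := by ring
    rw [e1]
    rw [e2] at hcosh
    convert hcosh using 3 <;> ring
end
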